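/- Let A be an n×n Hermitian positive-definite matrix with largest eigenvalue λmax, 0 < α < 1, t ≥ 0, w > 0, b, x̃ ∈ ℂⁿ, and ε > 0, m ≥ 1. If the residual r = b − (t^{1/α} I + A) x̃ satisfies ‖r‖₂ ≤ (ε/(2m)) · (απ/sin(απ)) · (1 + t^{1/α}/λmax)/w, then ‖(sin(απ)/(απ)) w A (t^{1/α}I + A)⁻¹ b − (sin(απ)/(απ)) w A x̃‖₂ ≤ ε/(2m). -/

import Mathlib

open Matrix
open scoped ComplexOrder

lemma aux_parseval {n : ℕ} (e : OrthonormalBasis (Fin n) ℂ (EuclideanSpace ℂ (Fin n)))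
    (a : Fin n → ℂ) :
    ‖∑ i, a i • e i‖ ^ 2 = ∑ i, ‖a i‖ ^ 2 := by
  have h := e.orthonormal.inner_sum a a Finset.univ
  rw [inner_self_eq_norm_sq_to_K] at h
  simp only [RCLike.conj_mul] at h
  exact_mod_cast h

lemma aux_diag {n : ℕ} (e : OrthonormalBasis (Fin n) ℂ (EuclideanSpace ℂ (Fin n)))
    (M : Matrix (Fin n) (Fin n) ℂ) (j : Fin n) (μ : ℝ)
    (h : M *ᵥ ⇑(e j) = μ • ⇑(e j)) :
    Matrix.toEuclideanLin M (e j) = (μ : ℂ) • e j := by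
  apply (WithLp.equiv 2 _).injective
  change M *ᵥ ⇑(e j) = _
  show M *ᵥ ⇑(e j) = _
  rw [h]
  funext i
  simp [Complex.real_smul]

lemma aux_bound {n : ℕ} (e : OrthonormalBasis (Fin n) ℂ (EuclideanSpace ℂ (Fin n)))
    (M : Matrix (Fin n) (Fin n) ℂ) (μ : Fin n → ℝ) (c : ℝ) (hc : 0 ≤ c)
    (hT : ∀ j, Matrix.toEuclideanLin M (e j) = (μ j : ℂ) • e j)
    (hμ : ∀ j, |μ j| ≤ c) (v : EuclideanSpace ℂ (Fin n)) :
    ‖Matrix.toEuclideanLin M v‖ ≤ c * ‖v‖ := by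
  have hv : ∑ i, e.repr v i • e i = v := e.sum_repr v
  have hexp : Matrix.toEuclideanLin M v = ∑ i, (e.repr v i * (μ i : ℂ)) • e i := by
    conv_lhs => rw [← hv]
    rw [map_sum]
    exact Finset.sum_congr rfl fun i _ => by
      rw [LinearMap.map_smul, hT i, smul_smul]
  have hv2 : ‖v‖ ^ 2 = ∑ i, ‖e.repr v i‖ ^ 2 := by
    conv_lhs => rw [← hv]
    rw [aux_parseval]
  have h1 : ‖Matrix.toEuclideanLin M v‖ ^ 2 ≤ (c * ‖v‖) ^ 2 := by
    rw [hexp, aux_parseval, mul_pow, hv2, Finset.mul_sum]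
    refine Finset.sum_le_sum fun i _ => ?_
    rw [norm_mul]
    have h3 : ‖(μ i : ℂ)‖ = |μ i| := by simp
    rw [h3, mul_pow]
    have h4 : |μ i| ^ 2 ≤ c ^ 2 := by nlinarith [abs_nonneg (μ i), hμ i]
    nlinarith [mul_le_mul_of_nonneg_left h4 (sq_nonneg (‖e.repr v i‖))]
  have h2 := Real.sqrt_le_sqrt h1
  rwa [Real.sqrt_sq (norm_nonneg _), Real.sqrt_sq (by positivity)] at h2

theorem stmt15 {n m : ℕ} (hm : 1 ≤ m) (A : Matrix (Fin n) (Fin n) ℂ) (hA : A.PosDef)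
    (lammax : ℝ)
    (hmax : ∀ i, hA.isHermitian.eigenvalues i ≤ lammax)
    (hmem : ∃ i, hA.isHermitian.eigenvalues i = lammax)
    (α : ℝ) (hα : 0 < α) (hα1 : α < 1)
    (t w : ℝ) (ht : 0 ≤ t) (hw : 0 < w)
    (b x' : EuclideanSpace ℂ (Fin n)) (ε : ℝ) (hε : 0 < ε)
    (hres : ‖b - Matrix.toEuclideanLin
        (((t ^ (1/α) : ℝ) : ℂ) • (1 : Matrix (Fin n) (Fin n) ℂ) + A) x'‖ ≤
      (ε / (2 * m)) * ((α * Real.pi) / Real.sin (α * Real.pi)) *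
        ((1 + t ^ (1/α) / lammax) / w)) :
    ‖(Real.sin (α * Real.pi) / (α * Real.pi) * w) •
          Matrix.toEuclideanLin
            (A * (((t ^ (1/α) : ℝ) : ℂ) • (1 : Matrix (Fin n) (Fin n) ℂ) + A)⁻¹) b
        - (Real.sin (α * Real.pi) / (α * Real.pi) * w) • Matrix.toEuclideanLin A x'‖ ≤
      ε / (2 * m) := by
  have hs : (0:ℝ) ≤ t ^ (1/α) := Real.rpow_nonneg ht _
  set s : ℝ := t ^ (1/α) with hs_def
  set B : Matrix (Fin n) (Fin n) ℂ := ((s : ℝ) : ℂ) • 1 + A with hB_def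
  have hsmul : (((s : ℝ) : ℂ) • (1 : Matrix (Fin n) (Fin n) ℂ)).PosSemidef := by
    rw [posSemidef_iff_dotProduct_mulVec]
    constructor
    · show _ = _
      rw [conjTranspose_smul, conjTranspose_one]
      simp [Complex.conj_ofReal]
    · intro x
      simp only [smul_mulVec, one_mulVec, dotProduct_smul, smul_eq_mul]
      exact mul_nonneg (by exact_mod_cast hs) (dotProduct_star_self_nonneg x)
  have hB : B.PosDef := Matrix.PosDef.posSemidef_add hsmul hA
  have hBdet : IsUnit B.det := hB.det_pos.ne'.isUnit
  have hBinvB : B⁻¹ * B = 1 := Matrix.nonsing_inv_mul B hBdet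
  set e := hA.isHermitian.eigenvectorBasis with he_def
  set lam := hA.isHermitian.eigenvalues with hlam_def
  have hlampos : ∀ j, 0 < lam j := hA.eigenvalues_pos
  have hlmax : 0 < lammax := by
    obtain ⟨i, hi⟩ := hmem; rw [← hi]; exact hlampos i
  have hmu : ∀ j, 0 < s + lam j := fun j => add_pos_of_nonneg_of_pos hs (hlampos j)
  have hAe : ∀ j, A *ᵥ ⇑(e j) = lam j • ⇑(e j) := hA.isHermitian.mulVec_eigenvectorBasis
  have hBe : ∀ j, B *ᵥ ⇑(e j) = (s + lam j) • ⇑(e j) := by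
    intro j
    rw [hB_def, add_mulVec, smul_mulVec, one_mulVec, hAe j]
    funext i
    simp [Complex.real_smul]
    ring
  have hBinve : ∀ j, B⁻¹ *ᵥ ⇑(e j) = (s + lam j)⁻¹ • ⇑(e j) := by
    intro j
    have h1 : B⁻¹ *ᵥ (B *ᵥ ⇑(e j)) = ⇑(e j) := by
      rw [mulVec_mulVec, hBinvB, one_mulVec]
    rw [hBe j, mulVec_smul] at h1
    have h2 : B⁻¹ *ᵥ ⇑(e j) = (s + lam j)⁻¹ • ((s + lam j) • (B⁻¹ *ᵥ ⇑(e j))) := by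
      rw [smul_smul, inv_mul_cancel₀ (hmu j).ne', one_smul]
    rw [h2, h1]
  have hMe : ∀ j, (A * B⁻¹) *ᵥ ⇑(e j) = (lam j / (s + lam j)) • ⇑(e j) := by
    intro j
    rw [← mulVec_mulVec, hBinve j, mulVec_smul, hAe j, smul_smul]
    rw [div_eq_inv_mul]
  have hsl : 0 < s + lammax := add_pos_of_nonneg_of_pos hs hlmax
  set c : ℝ := lammax / (s + lammax) with hc_def
  have hc : 0 ≤ c := div_nonneg hlmax.le hsl.le
  have hμc : ∀ j, |lam j / (s + lam j)| ≤ c := by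
    intro j
    rw [abs_of_nonneg (div_nonneg (hlampos j).le (hmu j).le), hc_def,
      div_le_div_iff₀ (hmu j) hsl]
    nlinarith [hmax j, hlampos j, hs, hlmax]
  have hbound := aux_bound e (A * B⁻¹) (fun j => lam j / (s + lam j)) c hc
    (fun j => aux_diag e _ j _ (hMe j)) hμc
  set r : EuclideanSpace ℂ (Fin n) := b - Matrix.toEuclideanLin B x' with hr_def
  have hcomp : Matrix.toEuclideanLin (A * B⁻¹) (Matrix.toEuclideanLin B x')
      = Matrix.toEuclideanLin A x' := by
    apply (WithLp.equiv 2 _).injective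
    change (A * B⁻¹) *ᵥ (B *ᵥ ⇑x') = A *ᵥ ⇑x'
    rw [mulVec_mulVec, mul_assoc, hBinvB, mul_one]
  have hid : Matrix.toEuclideanLin (A * B⁻¹) b - Matrix.toEuclideanLin A x'
      = Matrix.toEuclideanLin (A * B⁻¹) r := by
    rw [hr_def, map_sub, hcomp]
  have hsin : 0 < Real.sin (α * Real.pi) :=
    Real.sin_pos_of_pos_of_lt_pi (by positivity) (by nlinarith [Real.pi_pos])
  set k : ℝ := Real.sin (α * Real.pi) / (α * Real.pi) * w with hk_def
  have hk : 0 < k := by positivity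
  have hpi : (0:ℝ) < Real.pi := Real.pi_pos
  have hrn : (0:ℝ) ≤ ‖r‖ := norm_nonneg r
  have hmpos : (0:ℝ) < (m : ℝ) := by exact_mod_cast hm
  calc ‖k • Matrix.toEuclideanLin (A * B⁻¹) b - k • Matrix.toEuclideanLin A x'‖
      = k * ‖Matrix.toEuclideanLin (A * B⁻¹) r‖ := by
        rw [← smul_sub, hid, norm_smul, Real.norm_eq_abs, abs_of_pos hk]
    _ ≤ k * (c * ‖r‖) := by
        exact mul_le_mul_of_nonneg_left (hbound r) hk.le
    _ ≤ k * (c * ((ε / (2 * m)) * ((α * Real.pi) / Real.sin (α * Real.pi)) *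
          ((1 + s / lammax) / w))) := by
        refine mul_le_mul_of_nonneg_left (mul_le_mul_of_nonneg_left ?_ hc) hk.le
        exact hres
    _ = ε / (2 * m) := by
        rw [hk_def, hc_def]
        field_simp
        ring
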